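/- Assume G satisfies the U-Hypothesis with respect to ℕ; set N̄ := N∖ℕ and U := {n ∈ ℕ : n⁻¹ ∈ ℕ}, and let Γ := N/U be the quotient group (U is normal in N). Then the relation on Γ defined by Ua < Ub if and only if Ua ≠ Ub and ba⁻¹ ∈ N̄ is well defined (independent of coset representatives) and is a linear order on Γ; it is compatible with multiplication, i.e., Ua ≤ Uc and Ub ≤ Ud imply U(ab) ≤ U(cd); and for all Ua ≠ Ub in Γ, the setwise sum Ua + Ub is contained in N and equals min{Ua, Ub} as a subset of N. -/

import Mathlib

open scoped Pointwise

/-- The subset of `D` consisting of (the values of) the units belonging to `N`. -/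
def unitsSet {D : Type*} [DivisionRing D] (N : Subgroup Dˣ) : Set D :=
  Units.val '' (N : Set Dˣ)

/-- For `a : D`, the set `N(a) = {n ∈ N : a + n ∈ N}`. -/
def nSet {D : Type*} [DivisionRing D] (N : Subgroup Dˣ) (a : D) : Set D :=
  {x : D | x ∈ unitsSet N ∧ a + x ∈ unitsSet N}

/-- The commuting graph of a group: vertices are the nonidentity elements,
two distinct nonidentity elements are adjacent iff they commute. (The identity is
an isolated vertex.) -/
def commGraph (Q : Type*) [Group Q] : SimpleGraph Q where
  Adj a b := a ≠ b ∧ a ≠ 1 ∧ b ≠ 1 ∧ a * b = b * a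
  symm := by
    refine ⟨?_⟩
    intro a b h
    exact ⟨Ne.symm h.1, h.2.2.1, h.2.1, h.2.2.2.symm⟩
  loopless := by refine ⟨?_⟩; intro a h; exact h.1 rfl

/-- `distGT Γ u v k` : there is no path (walk) of length at most `k` from `u` to `v`,
i.e. `d(u,v) > k`. -/
def distGT {Q : Type*} (Γ : SimpleGraph Q) (u v : Q) (k : ℕ) : Prop :=
  ∀ p : Γ.Walk u v, k < p.length

/-- `G` satisfies the *U-Hypothesis* with respect to `S`: `S` is a conjugation-invariant
subset of `G` with `∅ ≠ S ⊊ N` such that (U1) `1, −1 ∈ S`; (U2) `S·S = S`;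
(U3) for all `n̄ ∈ N∖S`, `n̄ + 1 ∈ S` and `n̄ − 1 ∈ N`. -/
def UHyp {D : Type*} [DivisionRing D] (N : Subgroup Dˣ) (S : Set D) : Prop :=
  (∀ g : Dˣ, (fun t => (g : D)⁻¹ * t * (g : D)) '' S = S) ∧
  S.Nonempty ∧ S ⊂ unitsSet N ∧
  (1 : D) ∈ S ∧ (-1 : D) ∈ S ∧
  S * S = S ∧
  (∀ t ∈ unitsSet N \ S, t + 1 ∈ S ∧ t - 1 ∈ unitsSet N)

/-- With `U = {n ∈ S : n⁻¹ ∈ S}` (a normal subgroup of `G`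
contained in `N`), consider the cosets `Ua` (for `a ∈ N`), i.e. the elements of
`Γ = N/U`, and the relation `Ua < Ub ↔ Ua ≠ Ub ∧ ba⁻¹ ∈ N̄`. This relation is
well defined on cosets, is a (strict) linear order on `Γ`, is compatible with
multiplication, and for `Ua ≠ Ub` the setwise sum `Ua + Ub` is contained in `N`
and equals `min{Ua, Ub}`. -/
theorem stmt_17 {D : Type*} [DivisionRing D] [Infinite D] (N : Subgroup Dˣ)
    [N.Normal] (hF : ∀ x : Dˣ, (x : D) ∈ Set.center D → x ∈ N)
    (hfin : Finite (Dˣ ⧸ N))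
    (S : Set D) (hS : UHyp N S)
    (Nbar Us : Set D) (cos : D → Set D) (lt : D → D → Prop)
    (hNbar : Nbar = unitsSet N \ S)
    (hUs : Us = {t : D | t ∈ S ∧ t⁻¹ ∈ S})
    (hcos : cos = fun a => (fun u => u * a) '' Us)
    (hlt : lt = fun a b => cos a ≠ cos b ∧ b * a⁻¹ ∈ Nbar) :
    -- the relation is independent of the choice of coset representatives
    (∀ a ∈ unitsSet N, ∀ b ∈ unitsSet N, ∀ a' ∈ unitsSet N, ∀ b' ∈ unitsSet N,
      cos a = cos a' → cos b = cos b' → (lt a b ↔ lt a' b')) ∧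
    -- totality
    (∀ a ∈ unitsSet N, ∀ b ∈ unitsSet N, cos a ≠ cos b → (lt a b ∨ lt b a)) ∧
    -- asymmetry
    (∀ a ∈ unitsSet N, ∀ b ∈ unitsSet N, ¬ (lt a b ∧ lt b a)) ∧
    -- transitivity
    (∀ a ∈ unitsSet N, ∀ b ∈ unitsSet N, ∀ c ∈ unitsSet N,
      lt a b → lt b c → lt a c) ∧
    -- compatibility with multiplication: Ua ≤ Uc and Ub ≤ Ud imply U(ab) ≤ U(cd)
    (∀ a ∈ unitsSet N, ∀ b ∈ unitsSet N, ∀ c ∈ unitsSet N, ∀ d ∈ unitsSet N,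
      (cos a = cos c ∨ lt a c) → (cos b = cos d ∨ lt b d) →
      (cos (a * b) = cos (c * d) ∨ lt (a * b) (c * d))) ∧
    -- the setwise sum of two distinct cosets lies in N and equals the minimum
    (∀ a ∈ unitsSet N, ∀ b ∈ unitsSet N, cos a ≠ cos b →
      cos a + cos b ⊆ unitsSet N ∧
      (lt a b → cos a + cos b = cos a) ∧
      (lt b a → cos a + cos b = cos b)) := by

  subst hNbar hUs
  simp only [hcos, hlt]
  clear hcos hlt
  unfold UHyp at hS
  obtain ⟨hconj, -, hSsub, h1S, hn1S, hSS, hU3⟩ := hS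
  have hSuN : S ⊆ unitsSet N := hSsub.1
  have huN0 : ∀ x ∈ unitsSet N, x ≠ 0 := by rintro x ⟨u, -, rfl⟩; exact u.ne_zero
  have huNmul : ∀ x ∈ unitsSet N, ∀ y ∈ unitsSet N, x * y ∈ unitsSet N := by
    rintro x ⟨u, hu, rfl⟩ y ⟨v, hv, rfl⟩
    exact ⟨u * v, mul_mem hu hv, rfl⟩
  have huNinv : ∀ x ∈ unitsSet N, x⁻¹ ∈ unitsSet N := by
    rintro x ⟨u, hu, rfl⟩
    exact ⟨u⁻¹, inv_mem hu, u.val_inv_eq_inv_val⟩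
  have hS0 : ∀ s ∈ S, s ≠ 0 := fun s hs => huN0 s (hSuN hs)
  have hsmul : ∀ s ∈ S, ∀ t ∈ S, s * t ∈ S := fun s hs t ht => by
    rw [← hSS]; exact Set.mul_mem_mul hs ht
  have hadd1 : ∀ m ∈ unitsSet N \ S, m + 1 ∈ S := fun m hm => (hU3 m hm).1
  have hsub1 : ∀ m ∈ unitsSet N \ S, m - 1 ∈ S := by
    intro m hm
    by_contra hc
    have h2 := hadd1 _ ⟨(hU3 m hm).2, hc⟩
    rw [sub_add_cancel] at h2
    exact hm.2 h2
  have hinvS : ∀ m ∈ unitsSet N \ S, m⁻¹ ∈ S := by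
    intro m hm
    have hm0 : m ≠ 0 := huN0 m hm.1
    by_contra hinv
    have hm' : m⁻¹ ∈ unitsSet N \ S := ⟨huNinv m hm.1, hinv⟩
    have ht : m⁻¹ + 1 ∈ S := hadd1 _ hm'
    have hs : m + 1 ∈ S := hadd1 _ hm
    have ht0 : m⁻¹ + 1 ≠ 0 := hS0 _ ht
    have hst : m * (m⁻¹ + 1) = m + 1 := by
      rw [mul_add, mul_inv_cancel₀ hm0, mul_one, add_comm]
    have htinv : (m⁻¹ + 1)⁻¹ ∉ S := by
      intro hc
      have h3 := hsmul _ hs _ hc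
      rw [← hst, mul_assoc, mul_inv_cancel₀ ht0, mul_one] at h3
      exact hm.2 h3
    have h2 : (m⁻¹ + 1)⁻¹ - 1 ∈ S :=
      hsub1 _ ⟨huNinv _ (hSuN ht), htinv⟩
    have heq : (m⁻¹ + 1)⁻¹ - 1 = -((m⁻¹ + 1)⁻¹ * m⁻¹) := by
      have h1 : (m⁻¹ + 1)⁻¹ * (1 - (m⁻¹ + 1)) = (m⁻¹ + 1)⁻¹ - 1 := by
        rw [mul_sub, mul_one, inv_mul_cancel₀ ht0]
      rw [← h1, show (1 : D) - (m⁻¹ + 1) = -m⁻¹ by abel, mul_neg]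
    have h3 : (m⁻¹ + 1)⁻¹ * m⁻¹ ∈ S := by
      have h4 := hsmul _ hn1S _ h2
      rwa [heq, neg_one_mul, neg_neg] at h4
    have h4 := hsmul _ ht _ h3
    rw [mul_inv_cancel_left₀ ht0] at h4
    exact hinv h4
  have hinv1add : ∀ m ∈ unitsSet N \ S, (1 + m)⁻¹ ∈ S := by
    intro m hm
    have hm0 : m ≠ 0 := huN0 m hm.1
    have hs : 1 + m ∈ S := by rw [add_comm]; exact hadd1 _ hm
    have hs0 : (1 : D) + m ≠ 0 := hS0 _ hs
    by_contra hc
    have h2 : (1 + m)⁻¹ - 1 ∈ S := hsub1 _ ⟨huNinv _ (hSuN hs), hc⟩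
    have heq : (1 + m)⁻¹ - 1 = -((1 + m)⁻¹ * m) := by
      have h1 : (1 + m)⁻¹ * (1 - (1 + m)) = (1 + m)⁻¹ - 1 := by
        rw [mul_sub, mul_one, inv_mul_cancel₀ hs0]
      rw [← h1, show (1 : D) - (1 + m) = -m by abel, mul_neg]
    have h3 : (1 + m)⁻¹ * m ∈ S := by
      have h4 := hsmul _ hn1S _ h2
      rwa [heq, neg_one_mul, neg_neg] at h4
    have h4 := hsmul _ h3 _ (hinvS _ hm)
    rw [mul_assoc, mul_inv_cancel₀ hm0, mul_one] at h4
    exact hc h4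
  -- facts about U = {t | t ∈ S ∧ t⁻¹ ∈ S}
  have hU1 : (1 : D) ∈ S ∧ (1 : D)⁻¹ ∈ S := ⟨h1S, by rw [inv_one]; exact h1S⟩
  have hUmulU : ∀ u v : D, (u ∈ S ∧ u⁻¹ ∈ S) → (v ∈ S ∧ v⁻¹ ∈ S) →
      ((u * v) ∈ S ∧ (u * v)⁻¹ ∈ S) :=
    fun u v hu hv => ⟨hsmul _ hu.1 _ hv.1, by rw [mul_inv_rev]; exact hsmul _ hv.2 _ hu.2⟩
  have hUinv : ∀ u : D, (u ∈ S ∧ u⁻¹ ∈ S) → (u⁻¹ ∈ S ∧ (u⁻¹)⁻¹ ∈ S) :=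
    fun u hu => ⟨hu.2, by rw [inv_inv]; exact hu.1⟩
  have hU0 : ∀ u : D, (u ∈ S ∧ u⁻¹ ∈ S) → u ≠ 0 := fun u hu => hS0 _ hu.1
  have hUn1 : (-1 : D) ∈ S ∧ (-1 : D)⁻¹ ∈ S := ⟨hn1S, by rw [inv_neg, inv_one]; exact hn1S⟩
  have hUmulNbar : ∀ u : D, (u ∈ S ∧ u⁻¹ ∈ S) → ∀ m ∈ unitsSet N \ S,
      u * m ∈ unitsSet N \ S := by
    intro u hu m hm
    refine ⟨huNmul _ (hSuN hu.1) _ hm.1, fun hc => hm.2 ?_⟩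
    have h2 := hsmul _ hu.2 _ hc
    rwa [inv_mul_cancel_left₀ (hU0 _ hu)] at h2
  have hNbarMulU : ∀ m ∈ unitsSet N \ S, ∀ u : D, (u ∈ S ∧ u⁻¹ ∈ S) →
      m * u ∈ unitsSet N \ S := by
    intro m hm u hu
    refine ⟨huNmul _ hm.1 _ (hSuN hu.1), fun hc => hm.2 ?_⟩
    have h2 := hsmul _ hc _ hu.2
    rwa [mul_inv_cancel_right₀ (hU0 _ hu)] at h2
  have hnegNbar : ∀ m ∈ unitsSet N \ S, -m ∈ unitsSet N \ S := by
    intro m hm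
    have h2 := hUmulNbar _ hUn1 m hm
    rwa [neg_one_mul] at h2
  have hNbarMul : ∀ m ∈ unitsSet N \ S, ∀ n ∈ unitsSet N \ S,
      m * n ∈ unitsSet N \ S := by
    intro m hm n hn
    refine ⟨huNmul _ hm.1 _ hn.1, fun hc => hm.2 ?_⟩
    have h2 := hsmul _ hc _ (hinvS _ hn)
    rwa [mul_inv_cancel_right₀ (huN0 _ hn.1)] at h2
  have hUaddNbar : ∀ u : D, (u ∈ S ∧ u⁻¹ ∈ S) → ∀ m ∈ unitsSet N \ S,
      ((u + m) ∈ S ∧ (u + m)⁻¹ ∈ S) := by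
    intro u hu m hm
    have hu0 := hU0 _ hu
    have hm' : u⁻¹ * m ∈ unitsSet N \ S := hUmulNbar _ (hUinv _ hu) m hm
    have heq : u + m = u * (1 + u⁻¹ * m) := by
      rw [mul_add, mul_one, mul_inv_cancel_left₀ hu0]
    have h1 : ((1 + u⁻¹ * m) ∈ S ∧ (1 + u⁻¹ * m)⁻¹ ∈ S) :=
      ⟨by rw [add_comm]; exact hadd1 _ hm', hinv1add _ hm'⟩
    rw [heq]
    exact hUmulU _ _ hu h1
  -- coset lemmas
  have hcos_of : ∀ a b : D, a ≠ 0 → b ≠ 0 → (b * a⁻¹ ∈ S ∧ (b * a⁻¹)⁻¹ ∈ S) →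
      (fun u => u * a) '' {t : D | t ∈ S ∧ t⁻¹ ∈ S} =
        (fun u => u * b) '' {t : D | t ∈ S ∧ t⁻¹ ∈ S} := by
    intro a b ha hb hu
    ext x
    constructor
    · rintro ⟨w, hw, rfl⟩
      refine ⟨w * (a * b⁻¹), hUmulU _ _ hw ?_, ?_⟩
      · have h2 : a * b⁻¹ = (b * a⁻¹)⁻¹ := by rw [mul_inv_rev, inv_inv]
        rw [h2]; exact hUinv _ hu
      · show w * (a * b⁻¹) * b = w * a
        rw [mul_assoc, inv_mul_cancel_right₀ hb]
    · rintro ⟨v, hv, rfl⟩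
      exact ⟨v * (b * a⁻¹), hUmulU _ _ hv hu,
        by show v * (b * a⁻¹) * a = v * b; rw [mul_assoc, inv_mul_cancel_right₀ ha]⟩
  have hcos_to : ∀ a b : D, a ≠ 0 →
      (fun u => u * a) '' {t : D | t ∈ S ∧ t⁻¹ ∈ S} =
        (fun u => u * b) '' {t : D | t ∈ S ∧ t⁻¹ ∈ S} →
      (b * a⁻¹ ∈ S ∧ (b * a⁻¹)⁻¹ ∈ S) := by
    intro a b ha h
    have hb : b ∈ (fun u => u * b) '' {t : D | t ∈ S ∧ t⁻¹ ∈ S} := ⟨1, hU1, one_mul b⟩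
    rw [← h] at hb
    obtain ⟨u, hu, hub⟩ := hb
    have h2 : b * a⁻¹ = u := by
      rw [show b = u * a from hub.symm, mul_inv_cancel_right₀ ha]
    rw [h2]; exact hu
  have hcos_ne : ∀ a b : D, a ≠ 0 → b * a⁻¹ ∈ unitsSet N \ S →
      (fun u => u * a) '' {t : D | t ∈ S ∧ t⁻¹ ∈ S} ≠
        (fun u => u * b) '' {t : D | t ∈ S ∧ t⁻¹ ∈ S} :=
    fun a b ha hm heq => hm.2 (hcos_to a b ha heq).1
  have htri : ∀ a ∈ unitsSet N, ∀ b ∈ unitsSet N,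
      (b * a⁻¹ ∈ S ∧ (b * a⁻¹)⁻¹ ∈ S) ∨ b * a⁻¹ ∈ unitsSet N \ S ∨
        a * b⁻¹ ∈ unitsSet N \ S := by
    intro a ha b hb
    have h1 : b * a⁻¹ ∈ unitsSet N := huNmul _ hb _ (huNinv _ ha)
    by_cases h2 : b * a⁻¹ ∈ S
    · by_cases h3 : (b * a⁻¹)⁻¹ ∈ S
      · exact Or.inl ⟨h2, h3⟩
      · refine Or.inr (Or.inr ?_)
        have h4 : a * b⁻¹ = (b * a⁻¹)⁻¹ := by rw [mul_inv_rev, inv_inv]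
        rw [h4]; exact ⟨huNinv _ h1, h3⟩
    · exact Or.inr (Or.inl ⟨h1, h2⟩)
  -- conjugation
  have hconjF : ∀ (g : Dˣ) (x : D), x ∈ S → (g : D)⁻¹ * x * g ∈ S := by
    intro g x hx
    rw [← hconj g]
    exact ⟨x, hx, rfl⟩
  have hconjL : ∀ c ∈ unitsSet N, ∀ x ∈ S, c * x * c⁻¹ ∈ S := by
    rintro c ⟨w, hw, rfl⟩ x hx
    have h2 := hconjF w⁻¹ x hx
    simpa [Units.val_inv_eq_inv_val] using h2
  have hconjR : ∀ c ∈ unitsSet N, ∀ x : D, c * x * c⁻¹ ∈ S → x ∈ S := by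
    rintro c ⟨w, hw, rfl⟩ x hx
    have h2 := hconjF w _ hx
    simpa [mul_assoc, inv_mul_cancel₀ w.ne_zero, inv_mul_cancel_left₀ w.ne_zero] using h2
  have hconjU : ∀ c ∈ unitsSet N, ∀ u : D, (u ∈ S ∧ u⁻¹ ∈ S) →
      (c * u * c⁻¹ ∈ S ∧ (c * u * c⁻¹)⁻¹ ∈ S) := by
    intro c hc u hu
    refine ⟨hconjL c hc u hu.1, ?_⟩
    have h2 : (c * u * c⁻¹)⁻¹ = c * u⁻¹ * c⁻¹ := by
      rw [mul_inv_rev, mul_inv_rev, inv_inv, mul_assoc]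
    rw [h2]; exact hconjL c hc u⁻¹ hu.2
  have hconjNbar : ∀ c ∈ unitsSet N, ∀ m ∈ unitsSet N \ S,
      c * m * c⁻¹ ∈ unitsSet N \ S := by
    intro c hc m hm
    exact ⟨huNmul _ (huNmul _ hc _ hm.1) _ (huNinv _ hc),
      fun h2 => hm.2 (hconjR c hc m h2)⟩
  -- sum lemma
  have hsum : ∀ a b : D, a ≠ 0 → b * a⁻¹ ∈ unitsSet N \ S →
      (fun u => u * a) '' {t : D | t ∈ S ∧ t⁻¹ ∈ S} +
        (fun u => u * b) '' {t : D | t ∈ S ∧ t⁻¹ ∈ S} =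
      (fun u => u * a) '' {t : D | t ∈ S ∧ t⁻¹ ∈ S} := by
    intro a b ha hba
    apply Set.Subset.antisymm
    · rintro x hx
      rw [Set.mem_add] at hx
      obtain ⟨y, ⟨u, hu, rfl⟩, z, ⟨v, hv, rfl⟩, rfl⟩ := hx
      refine ⟨u + v * (b * a⁻¹), hUaddNbar _ hu _ (hUmulNbar _ hv _ hba), ?_⟩
      show (u + v * (b * a⁻¹)) * a = u * a + v * b
      rw [add_mul, mul_assoc, inv_mul_cancel_right₀ ha]
    · rintro x ⟨u, hu, rfl⟩
      rw [Set.mem_add]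
      refine ⟨(u + -(b * a⁻¹)) * a, ⟨u + -(b * a⁻¹), hUaddNbar _ hu _ (hnegNbar _ hba), rfl⟩,
        1 * b, ⟨1, hU1, rfl⟩, ?_⟩
      rw [one_mul, add_mul, neg_mul, inv_mul_cancel_right₀ ha]
      abel
  refine ⟨?_, ?_, ?_, ?_, ?_, ?_⟩
  · -- well-definedness
    intro a ha b hb a' ha' b' hb' hca hcb
    have ha0 := huN0 _ ha
    have hb0 := huN0 _ hb
    have ha'0 := huN0 _ ha'
    have hb'0 := huN0 _ hb'
    have hua : (a' * a⁻¹ ∈ S ∧ (a' * a⁻¹)⁻¹ ∈ S) := hcos_to a a' ha0 hca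
    have hub : (b' * b⁻¹ ∈ S ∧ (b' * b⁻¹)⁻¹ ∈ S) := hcos_to b b' hb0 hcb
    have dir : ∀ x y x' y' : D, x ≠ 0 → y ≠ 0 →
        (x' * x⁻¹ ∈ S ∧ (x' * x⁻¹)⁻¹ ∈ S) → (y' * y⁻¹ ∈ S ∧ (y' * y⁻¹)⁻¹ ∈ S) →
        y * x⁻¹ ∈ unitsSet N \ S → y' * x'⁻¹ ∈ unitsSet N \ S := by
      intro x y x' y' hx hy hux huy hm
      have key : y' * x'⁻¹ = (y' * y⁻¹) * (y * x⁻¹) * (x * x'⁻¹) := by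
        simp only [mul_assoc, inv_mul_cancel_left₀ hy, inv_mul_cancel_left₀ hx]
      rw [key]
      have h1 : (y' * y⁻¹) * (y * x⁻¹) ∈ unitsSet N \ S := hUmulNbar _ huy _ hm
      have h2 : x * x'⁻¹ = (x' * x⁻¹)⁻¹ := by rw [mul_inv_rev, inv_inv]
      rw [h2]
      exact hNbarMulU _ h1 _ (hUinv _ hux)
    have hua' : (a * a'⁻¹ ∈ S ∧ (a * a'⁻¹)⁻¹ ∈ S) := by
      have h2 : a * a'⁻¹ = (a' * a⁻¹)⁻¹ := by rw [mul_inv_rev, inv_inv]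
      rw [h2]; exact hUinv _ hua
    have hub' : (b * b'⁻¹ ∈ S ∧ (b * b'⁻¹)⁻¹ ∈ S) := by
      have h2 : b * b'⁻¹ = (b' * b⁻¹)⁻¹ := by rw [mul_inv_rev, inv_inv]
      rw [h2]; exact hUinv _ hub
    constructor
    · rintro ⟨-, hm⟩
      have hm' := dir a b a' b' ha0 hb0 hua hub hm
      exact ⟨hcos_ne a' b' ha'0 hm', hm'⟩
    · rintro ⟨-, hm⟩
      have hm' := dir a' b' a b ha'0 hb'0 hua' hub' hm
      exact ⟨hcos_ne a b ha0 hm', hm'⟩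
  · -- totality
    intro a ha b hb hne
    rcases htri a ha b hb with h | h | h
    · exact absurd (hcos_of a b (huN0 _ ha) (huN0 _ hb) h) hne
    · exact Or.inl ⟨hne, h⟩
    · exact Or.inr ⟨Ne.symm hne, h⟩
  · -- asymmetry
    rintro a ha b hb ⟨⟨-, h1⟩, ⟨-, h2⟩⟩
    have h3 := hinvS _ h1
    rw [mul_inv_rev, inv_inv] at h3
    exact h2.2 h3
  · -- transitivity
    intro a ha b hb c hc h1 h2
    have hb0 := huN0 _ hb
    have key : c * a⁻¹ = (c * b⁻¹) * (b * a⁻¹) := by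
      simp only [mul_assoc, inv_mul_cancel_left₀ hb0]
    have hm : c * a⁻¹ ∈ unitsSet N \ S := by
      rw [key]; exact hNbarMul _ h2.2 _ h1.2
    exact ⟨hcos_ne a c (huN0 _ ha) hm, hm⟩
  · -- compatibility with multiplication
    intro a ha b hb c hc d hd h1 h2
    have ha0 := huN0 _ ha
    have hb0 := huN0 _ hb
    have hc0 := huN0 _ hc
    have hd0 := huN0 _ hd
    have hab : a * b ∈ unitsSet N := huNmul _ ha _ hb
    have hcd : c * d ∈ unitsSet N := huNmul _ hc _ hd
    have key : c * d * (a * b)⁻¹ = (c * (d * b⁻¹) * c⁻¹) * (c * a⁻¹) := by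
      rw [mul_inv_rev]
      simp only [mul_assoc, inv_mul_cancel_left₀ hc0]
    rcases h1 with h1 | h1 <;> rcases h2 with h2 | h2
    · left
      apply hcos_of (a * b) (c * d) (huN0 _ hab) (huN0 _ hcd)
      rw [key]
      exact hUmulU _ _ (hconjU c hc _ (hcos_to b d hb0 h2)) (hcos_to a c ha0 h1)
    · right
      have hm : c * d * (a * b)⁻¹ ∈ unitsSet N \ S := by
        rw [key]
        exact hNbarMulU _ (hconjNbar c hc _ h2.2) _ (hcos_to a c ha0 h1)
      exact ⟨hcos_ne (a * b) (c * d) (huN0 _ hab) hm, hm⟩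
    · right
      have hm : c * d * (a * b)⁻¹ ∈ unitsSet N \ S := by
        rw [key]
        exact hUmulNbar _ (hconjU c hc _ (hcos_to b d hb0 h2)) _ h1.2
      exact ⟨hcos_ne (a * b) (c * d) (huN0 _ hab) hm, hm⟩
    · right
      have hm : c * d * (a * b)⁻¹ ∈ unitsSet N \ S := by
        rw [key]
        exact hNbarMul _ (hconjNbar c hc _ h2.2) _ h1.2
      exact ⟨hcos_ne (a * b) (c * d) (huN0 _ hab) hm, hm⟩
  · -- setwise sum of distinct cosets
    intro a ha b hb hne
    have ha0 := huN0 _ ha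
    have hb0 := huN0 _ hb
    have hsub : (fun u => u * a) '' {t : D | t ∈ S ∧ t⁻¹ ∈ S} ⊆ unitsSet N := by
      rintro x ⟨u, hu, rfl⟩
      exact huNmul _ (hSuN hu.1) _ ha
    have hsub' : (fun u => u * b) '' {t : D | t ∈ S ∧ t⁻¹ ∈ S} ⊆ unitsSet N := by
      rintro x ⟨u, hu, rfl⟩
      exact huNmul _ (hSuN hu.1) _ hb
    refine ⟨?_, fun h => hsum a b ha0 h.2, fun h => by rw [add_comm]; exact hsum b a hb0 h.2⟩
    rcases htri a ha b hb with h | h | h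
    · exact absurd (hcos_of a b ha0 hb0 h) hne
    · rw [hsum a b ha0 h]; exact hsub
    · rw [add_comm, hsum b a hb0 h]; exact hsub'
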